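/- Let s be a unitary automorphism of (V,h). Assume that the only s-stable isotropic subspace of V is the zero subspace, and that there is no orthogonal decomposition V = V₁ ⊕ V₂ with V₁ and V₂ both nonzero s-stable subspaces. Then the K-subalgebra K[s] of End_K(V) generated by s is a field. -/
import Mathlib

private theorem exists_pow_idem' {M : Type*} [Monoid M] [Finite M] (a : M) :
    ∃ n, 0 < n ∧ a ^ n * a ^ n = a ^ n := by
  obtain ⟨m, n, hmn, heq⟩ := Finite.exists_ne_map_eq_of_infinite (fun k : ℕ => a ^ (k + 1))
  wlog hlt : m < n generalizing m n
  · exact this n m hmn.symm heq.symm (by omega)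
  set M0 := m + 1 with hM0
  set r := n - m with hr
  have hrpos : 0 < r := by omega
  have hbase : ∀ u, M0 ≤ u → a ^ (u + r) = a ^ u := by
    intro u hu
    have h2 : a ^ (M0 + r) = a ^ M0 := by
      have hnr : M0 + r = n + 1 := by omega
      rw [hnr]; exact heq.symm
    calc a ^ (u + r) = a ^ ((u - M0) + (M0 + r)) := by congr 1; omega
      _ = a ^ (u - M0) * a ^ (M0 + r) := pow_add a _ _
      _ = a ^ (u - M0) * a ^ M0 := by rw [h2]
      _ = a ^ ((u - M0) + M0) := (pow_add a _ _).symm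
      _ = a ^ u := by congr 1; omega
  have hiter : ∀ k u, M0 ≤ u → a ^ (u + k * r) = a ^ u := by
    intro k
    induction k with
    | zero => intro u _; simp
    | succ k ih =>
      intro u hu
      calc a ^ (u + (k + 1) * r) = a ^ ((u + k * r) + r) := by congr 1; ring
        _ = a ^ (u + k * r) := hbase _ (by omega)
        _ = a ^ u := ih u hu
  refine ⟨M0 * r, Nat.mul_pos (by omega) hrpos, ?_⟩
  calc a ^ (M0 * r) * a ^ (M0 * r) = a ^ (M0 * r + M0 * r) := (pow_add a _ _).symm
    _ = a ^ (M0 * r) := hiter M0 (M0 * r) (Nat.le_mul_of_pos_right M0 hrpos)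

set_option maxHeartbeats 1000000 in
set_option synthInstance.maxHeartbeats 400000 in
/-- If a unitary automorphism `s` of a nondegenerate hermitian space `(V, h)` stabilizes no
nonzero isotropic subspace and no nontrivial orthogonal decomposition, then the subalgebra
`K[s] ⊆ End_K(V)` generated by `s` is a field. -/
theorem adjoin_unitary_isField
    (q : ℕ) (hq : IsPrimePow q)
    (K : Type*) [Field K] [Fintype K] (hK : Fintype.card K = q ^ 2)
    (V : Type*) [AddCommGroup V] [Module K V] [FiniteDimensional K V] [Nontrivial V]
    (h : V → V → K)
    (h_add_left : ∀ x x' y : V, h (x + x') y = h x y + h x' y)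
    (h_add_right : ∀ x y y' : V, h x (y + y') = h x y + h x y')
    (h_smul_left : ∀ (c : K) (x y : V), h (c • x) y = c ^ q * h x y)
    (h_smul_right : ∀ (c : K) (x y : V), h x (c • y) = c * h x y)
    (h_symm : ∀ x y : V, h y x = (h x y) ^ q)
    (h_nondeg : ∀ x : V, (∀ y : V, h x y = 0) → x = 0)
    (s : V ≃ₗ[K] V)
    (hs : ∀ x y : V, h (s x) (s y) = h x y)
    (hiso : ∀ W : Submodule K V, (∀ w ∈ W, s w ∈ W) →
      (∀ w ∈ W, ∀ w' ∈ W, h w w' = 0) → W = ⊥)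
    (hdec : ¬ ∃ V₁ V₂ : Submodule K V, V₁ ≠ ⊥ ∧ V₂ ≠ ⊥ ∧
      (∀ v ∈ V₁, s v ∈ V₁) ∧ (∀ v ∈ V₂, s v ∈ V₂) ∧ IsCompl V₁ V₂ ∧
      (∀ x ∈ V₁, ∀ y ∈ V₂, h x y = 0)) :
    IsField ↥(Algebra.adjoin K {s.toLinearMap}) := by
  classical
  set S : V →ₗ[K] V := s.toLinearMap with hSdef
  set A : Subalgebra K (V →ₗ[K] V) := Algebra.adjoin K {S} with hAdef
  -- basic facts about h
  have h0r : ∀ x : V, h x 0 = 0 := by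
    intro x
    have hh := h_add_right x 0 0
    rw [add_zero] at hh
    exact (left_eq_add.mp hh)
  have h_sub_left : ∀ x x' y : V, h (x - x') y = h x y - h x' y := by
    intro x x' y
    have hh := h_add_left (x - x') x' y
    rw [sub_add_cancel] at hh
    linear_combination -hh
  -- membership of S and of s.symm
  have hSA : S ∈ A := Algebra.self_mem_adjoin_singleton K S
  haveI : FiniteDimensional K A := inferInstance
  have hSinv : s.symm.toLinearMap ∈ A := by
    have hinj : Function.Injective (LinearMap.mulLeft K (⟨S, hSA⟩ : A)) := by
      intro t t' htt
      have hv : S * (t : V →ₗ[K] V) = S * (t' : V →ₗ[K] V) := by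
        have h2 := congrArg (Subtype.val) htt
        simpa [LinearMap.mulLeft_apply] using h2
      apply Subtype.ext
      ext v
      have h3 := congrFun (congrArg (fun (f : V →ₗ[K] V) => (f : V → V)) hv) v
      simp only [Module.End.mul_apply] at h3
      exact s.injective h3
    obtain ⟨t, ht⟩ := (LinearMap.injective_iff_surjective.mp hinj) 1
    have htv : S * (t : V →ₗ[K] V) = 1 := by
      have h2 := congrArg Subtype.val ht
      simpa [LinearMap.mulLeft_apply] using h2
    have hts : (t : V →ₗ[K] V) = s.symm.toLinearMap := by
      ext v
      have h3 := congrFun (congrArg (fun (f : V →ₗ[K] V) => (f : V → V)) htv) v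
      simp only [Module.End.mul_apply, Module.End.one_apply] at h3
      have h4 : s.symm (s ((t : V →ₗ[K] V) v)) = s.symm v := congrArg s.symm h3
      simpa using h4
    rw [← hts]; exact t.2
  -- adjoint existence
  have adj : ∀ a ∈ A, ∃ b ∈ A, ∀ x y : V, h (a x) y = h x (b y) := by
    intro a ha
    induction ha using Algebra.adjoin_induction with
    | mem x hx =>
      rcases Set.mem_singleton_iff.mp hx with rfl
      refine ⟨s.symm.toLinearMap, hSinv, fun x y => ?_⟩
      show h (s x) y = h x (s.symm y)
      rw [← hs x (s.symm y), LinearEquiv.apply_symm_apply]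
    | algebraMap r =>
      refine ⟨algebraMap K (V →ₗ[K] V) (r ^ q), Subalgebra.algebraMap_mem _ _, fun x y => ?_⟩
      rw [Module.algebraMap_end_apply, Module.algebraMap_end_apply,
        h_smul_left, h_smul_right]
    | add x y hx hy ihx ihy =>
      obtain ⟨bx, hbxA, hbx⟩ := ihx
      obtain ⟨bz, hbzA, hbz⟩ := ihy
      refine ⟨bx + bz, add_mem hbxA hbzA, fun u v => ?_⟩
      rw [LinearMap.add_apply, LinearMap.add_apply, h_add_left, h_add_right, hbx, hbz]
    | mul x y hx hy ihx ihy =>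
      obtain ⟨bx, hbxA, hbx⟩ := ihx
      obtain ⟨bz, hbzA, hbz⟩ := ihy
      refine ⟨bz * bx, mul_mem hbzA hbxA, fun u v => ?_⟩
      rw [Module.End.mul_apply, Module.End.mul_apply, hbx, hbz]
  have adj_flip : ∀ (a b : V →ₗ[K] V), (∀ x y : V, h (a x) y = h x (b y)) →
      (∀ x y : V, h (b x) y = h x (a y)) := by
    intro a b hb x y
    have hq2 : ∀ c : K, (c ^ q) ^ q = c := by
      intro c
      rw [← pow_mul, ← sq, ← hK]
      exact FiniteField.pow_card c
    calc h (b x) y = (h y (b x)) ^ q := h_symm y (b x)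
      _ = (h (a y) x) ^ q := by rw [hb y x]
      _ = ((h x (a y)) ^ q) ^ q := by rw [← h_symm x (a y)]
      _ = h x (a y) := hq2 _
  -- any element of A whose range is self-orthogonal is zero
  have range_trick : ∀ a : V →ₗ[K] V, a ∈ A → (∀ x y : V, h (a x) (a y) = 0) → a = 0 := by
    intro a haA hIso
    have hcomm : S * a = a * S := Algebra.commute_of_mem_adjoin_self haA
    have hrange : LinearMap.range a = ⊥ := by
      apply hiso
      · rintro w ⟨v, rfl⟩
        have h2 := congrFun (congrArg (fun (f : V →ₗ[K] V) => (f : V → V)) hcomm) v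
        simp only [hSdef, Module.End.mul_apply, LinearEquiv.coe_coe] at h2
        exact ⟨s v, h2.symm⟩
      · rintro w ⟨v, rfl⟩ w' ⟨v', rfl⟩
        exact hIso v v'
    exact LinearMap.range_eq_bot.mp hrange
  -- commutativity
  have Acomm : ∀ x y : A, x * y = y * x := by
    intro x y
    have hxy : Commute (x : V →ₗ[K] V) (y : V →ₗ[K] V) :=
      Algebra.commute_of_mem_adjoin_singleton_of_commute y.2
        (Algebra.commute_of_mem_adjoin_self x.2).symm
    exact Subtype.ext hxy
  -- no square-zero elements
  have sq_zero : ∀ a : A, a * a = 0 → a = 0 := by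
    intro a ha2
    have ha2' : (a : V →ₗ[K] V) * (a : V →ₗ[K] V) = 0 := by
      have h2 := congrArg Subtype.val ha2
      simpa using h2
    obtain ⟨b, hbA, hb⟩ := adj (a : V →ₗ[K] V) a.2
    have hbflip := adj_flip _ _ hb
    by_cases hc : b * (a : V →ₗ[K] V) = 0
    · apply Subtype.ext
      apply range_trick _ a.2
      intro x y
      calc h ((a : V →ₗ[K] V) x) ((a : V →ₗ[K] V) y)
          = h x (b ((a : V →ₗ[K] V) y)) := hb x _
        _ = h x ((b * (a : V →ₗ[K] V)) y) := rfl
        _ = h x 0 := by rw [hc]; rfl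
        _ = 0 := h0r x
    · exfalso
      set c : V →ₗ[K] V := b * (a : V →ₗ[K] V) with hcdef
      have hcA : c ∈ A := mul_mem hbA a.2
      have hcsa : ∀ x y : V, h (c x) y = h x (c y) := by
        intro x y
        calc h (c x) y = h (b ((a : V →ₗ[K] V) x)) y := rfl
          _ = h ((a : V →ₗ[K] V) x) ((a : V →ₗ[K] V) y) := hbflip _ _
          _ = h x (b ((a : V →ₗ[K] V) y)) := hb x _
          _ = h x (c y) := rfl
      have hcomm_ab : (a : V →ₗ[K] V) * b = b * (a : V →ₗ[K] V) := by
        have h2 := congrArg Subtype.val (Acomm a ⟨b, hbA⟩)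
        simpa using h2
      have hcc : c * c = 0 := by
        calc c * c = b * ((a : V →ₗ[K] V) * b) * (a : V →ₗ[K] V) := by
              rw [hcdef]; noncomm_ring
          _ = b * (b * (a : V →ₗ[K] V)) * (a : V →ₗ[K] V) := by rw [hcomm_ab]
          _ = (b * b) * ((a : V →ₗ[K] V) * (a : V →ₗ[K] V)) := by noncomm_ring
          _ = 0 := by rw [ha2', mul_zero]
      apply hc
      apply range_trick _ hcA
      intro x y
      calc h (c x) (c y) = h x (c (c y)) := hcsa x _
        _ = h x ((c * c) y) := rfl
        _ = h x 0 := by rw [hcc]; rfl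
        _ = 0 := h0r x
  -- 0 ≠ 1 in A
  have h01 : (0 : A) ≠ 1 := by
    intro h01
    have h2 := congrArg Subtype.val h01
    simp only [ZeroMemClass.coe_zero, OneMemClass.coe_one] at h2
    obtain ⟨v, hv⟩ := exists_ne (0 : V)
    apply hv
    have h3 := congrFun (congrArg (fun (f : V →ₗ[K] V) => (f : V → V)) h2) v
    simpa using h3.symm
  -- nonzero idempotents are 1
  have idem_one : ∀ e : A, e * e = e → e ≠ 0 → e = 1 := by
    intro e he hne
    have he' : (e : V →ₗ[K] V) * (e : V →ₗ[K] V) = (e : V →ₗ[K] V) := by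
      have h2 := congrArg Subtype.val he
      simpa using h2
    obtain ⟨b, hbA, hb⟩ := adj (e : V →ₗ[K] V) e.2
    have hbflip := adj_flip _ _ hb
    -- b is idempotent
    have hbb : b * b = b := by
      ext x
      have hz : ∀ y : V, h ((b * b) x - b x) y = 0 := by
        intro y
        rw [h_sub_left]
        have e1 : h ((b * b) x) y = h x ((e : V →ₗ[K] V) y) := by
          calc h ((b * b) x) y = h (b (b x)) y := rfl
            _ = h (b x) ((e : V →ₗ[K] V) y) := hbflip _ _
            _ = h x ((e : V →ₗ[K] V) ((e : V →ₗ[K] V) y)) := hbflip _ _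
            _ = h x (((e : V →ₗ[K] V) * (e : V →ₗ[K] V)) y) := rfl
            _ = h x ((e : V →ₗ[K] V) y) := by rw [he']
        have e2 : h (b x) y = h x ((e : V →ₗ[K] V) y) := hbflip _ _
        rw [e1, e2, sub_self]
      have h4 := h_nondeg _ hz
      have h5 := sub_eq_zero.mp h4
      simpa using h5
    set f : V →ₗ[K] V := b * (e : V →ₗ[K] V) with hfdef
    have hfA : f ∈ A := mul_mem hbA e.2
    have hf_sa : ∀ x y : V, h (f x) y = h x (f y) := by
      intro x y
      calc h (f x) y = h (b ((e : V →ₗ[K] V) x)) y := rfl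
        _ = h ((e : V →ₗ[K] V) x) ((e : V →ₗ[K] V) y) := hbflip _ _
        _ = h x (b ((e : V →ₗ[K] V) y)) := hb _ _
        _ = h x (f y) := rfl
    have hcomm_eb : (e : V →ₗ[K] V) * b = b * (e : V →ₗ[K] V) := by
      have h2 := congrArg Subtype.val (Acomm e ⟨b, hbA⟩)
      simpa using h2
    have hff : f * f = f := by
      calc f * f = b * ((e : V →ₗ[K] V) * b) * (e : V →ₗ[K] V) := by
            rw [hfdef]; noncomm_ring
        _ = b * (b * (e : V →ₗ[K] V)) * (e : V →ₗ[K] V) := by rw [hcomm_eb]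
        _ = (b * b) * ((e : V →ₗ[K] V) * (e : V →ₗ[K] V)) := by noncomm_ring
        _ = b * (e : V →ₗ[K] V) := by rw [hbb, he']
        _ = f := rfl
    by_cases hf0 : f = 0
    · exfalso
      apply hne
      apply Subtype.ext
      apply range_trick _ e.2
      intro x y
      calc h ((e : V →ₗ[K] V) x) ((e : V →ₗ[K] V) y)
          = h x (b ((e : V →ₗ[K] V) y)) := hb _ _
        _ = h x (f y) := rfl
        _ = h x 0 := by rw [hf0]; rfl
        _ = 0 := h0r x
    by_cases hf1 : f = 1
    · apply Subtype.ext
      have h2 : (e : V →ₗ[K] V) = 1 := by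
        calc (e : V →ₗ[K] V) = 1 * (e : V →ₗ[K] V) := (one_mul _).symm
          _ = f * (e : V →ₗ[K] V) := by rw [hf1]
          _ = b * ((e : V →ₗ[K] V) * (e : V →ₗ[K] V)) := by rw [hfdef, mul_assoc]
          _ = b * (e : V →ₗ[K] V) := by rw [he']
          _ = f := rfl
          _ = 1 := hf1
      simpa using h2
    · exfalso
      apply hdec
      have hcommS : S * f = f * S := Algebra.commute_of_mem_adjoin_self hfA
      have hSf : ∀ v : V, s (f v) = f (s v) := by
        intro v
        have h2 := congrFun (congrArg (fun (g : V →ₗ[K] V) => (g : V → V)) hcommS) v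
        simp only [hSdef, Module.End.mul_apply, LinearEquiv.coe_coe] at h2
        exact h2
      refine ⟨LinearMap.range f, LinearMap.ker f, ?_, ?_, ?_, ?_, ⟨?_, ?_⟩, ?_⟩
      · intro hbot
        exact hf0 (LinearMap.range_eq_bot.mp hbot)
      · intro hbot
        apply hf1
        have hinj : Function.Injective f := LinearMap.ker_eq_bot.mp hbot
        ext v
        have h2 : f (f v) = f v := by
          rw [← Module.End.mul_apply, hff]
        have h3 := hinj h2
        simpa using h3
      · rintro w ⟨v, rfl⟩
        exact ⟨s v, (hSf v).symm⟩
      · intro w hw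
        rw [LinearMap.mem_ker] at hw ⊢
        rw [← hSf w, hw]
        simp
      · rw [Submodule.disjoint_def]
        rintro x ⟨u, rfl⟩ hx2
        rw [LinearMap.mem_ker] at hx2
        have h2 : f (f u) = f u := by rw [← Module.End.mul_apply, hff]
        rw [← h2, hx2]
      · rw [codisjoint_iff, Submodule.eq_top_iff']
        intro x
        refine Submodule.mem_sup.mpr ⟨f x, ⟨x, rfl⟩, x - f x, ?_, by abel⟩
        rw [LinearMap.mem_ker, map_sub, ← Module.End.mul_apply, hff, sub_self]
      · rintro x ⟨u, rfl⟩ y hy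
        rw [LinearMap.mem_ker] at hy
        calc h (f u) y = h u (f y) := hf_sa u y
          _ = h u 0 := by rw [hy]
          _ = 0 := h0r u
  -- finiteness of A
  haveI : Finite A := Module.finite_of_finite K
  -- conclude
  refine ⟨⟨0, 1, h01⟩, Acomm, ?_⟩
  intro a ha
  obtain ⟨n, hn, hidem⟩ := exists_pow_idem' a
  by_cases h0 : a ^ n = 0
  · exfalso
    have hex : ∃ m, a ^ m = 0 := ⟨n, h0⟩
    have hm0 : a ^ (Nat.find hex) = 0 := Nat.find_spec hex
    set m := Nat.find hex with hm
    have hm1 : 1 ≤ m := by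
      rcases Nat.eq_zero_or_pos m with hz | hz
      · rw [hz, pow_zero] at hm0
        exact absurd hm0.symm h01
      · exact hz
    rcases Nat.lt_or_ge m 2 with h2 | h2
    · have hmm : m = 1 := by omega
      rw [hmm, pow_one] at hm0
      exact ha hm0
    · have hsq : a ^ (m - 1) * a ^ (m - 1) = 0 := by
        rw [← pow_add]
        have hee : (m - 1) + (m - 1) = m + (m - 2) := by omega
        rw [hee, pow_add, hm0, zero_mul]
      have hb := sq_zero (a ^ (m - 1)) hsq
      exact Nat.find_min hex (by omega : m - 1 < Nat.find hex) hb
  · have h1 : a ^ n = 1 := idem_one _ hidem h0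
    refine ⟨a ^ (n - 1), ?_⟩
    calc a * a ^ (n - 1) = a ^ (1 + (n - 1)) := by rw [pow_add, pow_one]
      _ = a ^ n := by congr 1; omega
      _ = 1 := h1
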